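/- Let λ be a probability vector in ℝ^d with exactly r nonzero entries, and define θ_k(λ) = max{0, −σ_min(Ω_k(λ))} where Ω_k(λ)_{ij} = k λ_i δ_{ij} − √(λ_i λ_j). Then θ_k(λ) ≤ 1 − k/r for every positive integer k ≤ r, with equality when all nonzero entries of λ equal 1/r. -/

import Mathlib

open Matrix

/-- The matrix `Ω_k(λ)` with entries `k λ_i δ_{ij} − √(λ_i λ_j)`. -/
noncomputable def OmegaMat (d k : ℕ) (lam : Fin d → ℝ) : Matrix (Fin d) (Fin d) ℝ :=
  fun i j => (if i = j then (k : ℝ) * lam i else 0) - Real.sqrt (lam i * lam j)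

lemma quadform_expand (d k : ℕ) (lam : Fin d → ℝ) (hnonneg : ∀ i, 0 ≤ lam i)
    (x : Fin d → ℝ) :
    x ⬝ᵥ (OmegaMat d k lam *ᵥ x)
      = (∑ i, (k:ℝ) * lam i * x i ^ 2) - (∑ i, Real.sqrt (lam i) * x i) ^ 2 := by
  calc x ⬝ᵥ (OmegaMat d k lam *ᵥ x)
      = ∑ i, ∑ j, ((if i = j then (k:ℝ) * lam i * (x i * x j) else 0)
          - (Real.sqrt (lam i) * x i) * (Real.sqrt (lam j) * x j)) := by
        simp only [dotProduct, mulVec, OmegaMat, Finset.mul_sum]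
        refine Finset.sum_congr rfl fun i _ => Finset.sum_congr rfl fun j _ => ?_
        rw [Real.sqrt_mul (hnonneg i)]
        split_ifs with h <;> ring
    _ = _ := by
        simp only [Finset.sum_sub_distrib]
        congr 1
        · refine Finset.sum_congr rfl fun i _ => ?_
          rw [Finset.sum_ite_eq (Finset.univ) i (fun j => (k:ℝ) * lam i * (x i * x j))]
          simp only [Finset.mem_univ, if_true]; ring
        · rw [sq, Finset.sum_mul_sum]

lemma quadform_ge (d k r : ℕ) (hk : 0 < k) (hkr : k ≤ r) (lam : Fin d → ℝ)
    (hnonneg : ∀ i, 0 ≤ lam i) (hsum : ∑ i, lam i = 1)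
    (hr : (Finset.univ.filter fun i => lam i ≠ 0).card = r)
    (x : Fin d → ℝ) :
    -(1 - (k:ℝ)/r) * ∑ i, x i ^ 2 ≤ x ⬝ᵥ (OmegaMat d k lam *ᵥ x) := by
  classical
  set S : Finset (Fin d) := Finset.univ.filter fun i => lam i ≠ 0 with hS
  have hrpos : 0 < r := by
    rcases Nat.eq_zero_or_pos r with h0 | h; swap; · exact h
    exfalso
    have hSe : S = ∅ := Finset.card_eq_zero.mp (by rw [← hr] at h0; omega)
    have hz : ∀ i, lam i = 0 := by
      intro i
      by_contra hne
      have : i ∈ S := by simp [hS, hne]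
      simp [hSe] at this
    simp [hz] at hsum
  have hrR : (0:ℝ) < r := by exact_mod_cast hrpos
  set c : ℝ := 1 - (k:ℝ)/r with hc
  have hc0 : 0 ≤ c := by
    rw [hc]
    have : (k:ℝ)/r ≤ 1 := by
      rw [div_le_one hrR]; exact_mod_cast hkr
    linarith
  have hsumS : ∑ i ∈ S, lam i = 1 := by
    rw [← hsum]; exact Finset.sum_filter_ne_zero _
  have hpos : ∀ i ∈ S, 0 < c + k * lam i := by
    intro i hi
    have hlam : 0 < lam i := lt_of_le_of_ne (hnonneg i) (Ne.symm (by simpa [hS] using hi))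
    have : 0 < (k:ℝ) * lam i := by positivity
    linarith
  -- Cauchy-Schwarz
  have hCS : (∑ i, Real.sqrt (lam i) * x i) ^ 2
      ≤ (∑ i ∈ S, lam i / (c + k * lam i)) * ∑ i ∈ S, (c + k * lam i) * x i ^ 2 := by
    have hres : ∑ i, Real.sqrt (lam i) * x i = ∑ i ∈ S, Real.sqrt (lam i) * x i := by
      symm
      apply Finset.sum_subset (Finset.subset_univ S)
      intro i _ hiS
      have : lam i = 0 := by by_contra hne; exact hiS (by simp [hS, hne])
      simp [this]
    rw [hres]
    apply Finset.sum_sq_le_sum_mul_sum_of_sq_eq_mul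
    · intro i hi
      exact le_of_lt (div_pos (lt_of_le_of_ne (hnonneg i) (Ne.symm (by simpa [hS] using hi))) (hpos i hi))
    · intro i hi
      exact mul_nonneg (le_of_lt (hpos i hi)) (sq_nonneg _)
    · intro i hi
      rw [mul_pow, Real.sq_sqrt (hnonneg i)]
      rw [div_mul_eq_mul_div, mul_comm (c + ↑k * lam i) (x i ^ 2), ← mul_assoc,
        mul_div_assoc, div_self (ne_of_gt (hpos i hi)), mul_one]
  -- tangent line trick
  have htan : ∑ i ∈ S, lam i / (c + k * lam i) ≤ 1 := by
    have hpt : ∀ i ∈ S, lam i / (c + k * lam i) ≤ 1/r + c * (lam i - 1/r) := by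
      intro i hi
      rw [div_le_iff₀ (hpos i hi)]
      have key : (1/(r:ℝ) + c * (lam i - 1/r)) * (c + k * lam i) - lam i
          = c * k * (lam i - 1/r)^2 := by
        rw [hc]; field_simp; ring
      nlinarith [sq_nonneg (lam i - 1/(r:ℝ)), mul_nonneg (mul_nonneg hc0 (Nat.cast_nonneg (α := ℝ) k)) (sq_nonneg (lam i - 1/(r:ℝ)))]
    calc ∑ i ∈ S, lam i / (c + k * lam i) ≤ ∑ i ∈ S, (1/r + c * (lam i - 1/r)) :=
          Finset.sum_le_sum hpt
      _ = 1 := by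
          rw [Finset.sum_add_distrib, ← Finset.mul_sum, Finset.sum_sub_distrib, hsumS]
          simp only [Finset.sum_const, hr, nsmul_eq_mul]
          field_simp
          ring
  have hsum2 : ∑ i ∈ S, (c + k * lam i) * x i ^ 2 ≤ c * (∑ i, x i ^ 2) + k * ∑ i, lam i * x i ^ 2 := by
    have : ∑ i ∈ S, (c + k * lam i) * x i ^ 2 ≤ ∑ i, (c + k * lam i) * x i ^ 2 := by
      apply Finset.sum_le_sum_of_subset_of_nonneg (Finset.subset_univ S)
      intro i _ hiS
      have hz : lam i = 0 := by by_contra hne; exact hiS (by simp [hS, hne])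
      simp [hz]
      positivity
    calc _ ≤ ∑ i, (c + k * lam i) * x i ^ 2 := this
      _ = c * (∑ i, x i ^ 2) + k * ∑ i, lam i * x i ^ 2 := by
          rw [Finset.mul_sum, Finset.mul_sum, ← Finset.sum_add_distrib]
          refine Finset.sum_congr rfl fun i _ => by ring
  have hCS2 : (∑ i, Real.sqrt (lam i) * x i) ^ 2
      ≤ c * (∑ i, x i ^ 2) + k * ∑ i, lam i * x i ^ 2 := by
    have h2 : 0 ≤ ∑ i ∈ S, (c + k * lam i) * x i ^ 2 :=
      Finset.sum_nonneg fun i hi => mul_nonneg (le_of_lt (hpos i hi)) (sq_nonneg _)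
    calc (∑ i, Real.sqrt (lam i) * x i) ^ 2
        ≤ (∑ i ∈ S, lam i / (c + k * lam i)) * ∑ i ∈ S, (c + k * lam i) * x i ^ 2 := hCS
      _ ≤ 1 * ∑ i ∈ S, (c + k * lam i) * x i ^ 2 := by
          apply mul_le_mul_of_nonneg_right htan h2
      _ = ∑ i ∈ S, (c + k * lam i) * x i ^ 2 := one_mul _
      _ ≤ _ := hsum2
  rw [quadform_expand d k lam hnonneg x]
  have : ∑ i, (k:ℝ) * lam i * x i ^ 2 = k * ∑ i, lam i * x i ^ 2 := by
    rw [Finset.mul_sum]; exact Finset.sum_congr rfl fun i _ => by ring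
  rw [this]
  linarith

lemma eigenvalue_ge (d : ℕ) (A : Matrix (Fin d) (Fin d) ℝ) (hH : A.IsHermitian) (i : Fin d)
    (c : ℝ) (hq : ∀ x : Fin d → ℝ, -c * ∑ j, x j ^ 2 ≤ x ⬝ᵥ (A *ᵥ x)) :
    -c ≤ hH.eigenvalues i := by
  have h1 := hH.eigenvalues_eq i
  set v : Fin d → ℝ := ⇑(hH.eigenvectorBasis i) with hv
  have hnorm : ∑ j, v j ^ 2 = 1 := by
    have hn := hH.eigenvectorBasis.orthonormal.1 i
    rw [EuclideanSpace.norm_eq] at hn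
    have := Real.sqrt_eq_one.mp hn
    simpa [Real.norm_eq_abs, sq_abs] using this
  have h2 : hH.eigenvalues i = v ⬝ᵥ (A *ᵥ v) := by simpa using h1
  have h3 := hq v
  rw [hnorm, mul_one] at h3
  linarith [h2 ▸ h3]

lemma eigenvalue_exists (d : ℕ) (A : Matrix (Fin d) (Fin d) ℝ) (hH : A.IsHermitian)
    (u : Fin d → ℝ) (hu0 : u ≠ 0) (μ : ℝ) (heig : A *ᵥ u = μ • u) :
    ∃ i, hH.eigenvalues i = μ := by
  have hsp : μ ∈ spectrum ℝ A := by
    rw [← AlgEquiv.spectrum_eq (Matrix.toLinAlgEquiv' (R := ℝ) (n := Fin d)) A,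
      ← Module.End.hasEigenvalue_iff_mem_spectrum]
    apply Module.End.hasEigenvalue_of_hasEigenvector (x := u)
    refine ⟨Module.End.mem_eigenspace_iff.mpr ?_, hu0⟩
    simpa [Matrix.toLinAlgEquiv'_apply, Matrix.toLin'_apply] using heig
  rw [hH.spectrum_real_eq_range_eigenvalues] at hsp
  exact hsp.imp fun i h => h

theorem stmt6 (d k r : ℕ) (hk : 0 < k) (hkr : k ≤ r) (lam : Fin d → ℝ)
    (hnonneg : ∀ i, 0 ≤ lam i) (hsum : ∑ i, lam i = 1)
    (hr : (Finset.univ.filter fun i => lam i ≠ 0).card = r)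
    (hH : (OmegaMat d k lam).IsHermitian) :
    max 0 (-(⨅ i, hH.eigenvalues i)) ≤ 1 - (k : ℝ) / r ∧
      ((∀ i, lam i ≠ 0 → lam i = 1 / r) →
        max 0 (-(⨅ i, hH.eigenvalues i)) = 1 - (k : ℝ) / r) := by
  classical
  -- there is a nonzero entry
  obtain ⟨i0, hi0⟩ : ∃ i, lam i ≠ 0 := by
    by_contra h
    push_neg at h
    simp [h] at hsum
  have : Nonempty (Fin d) := ⟨i0⟩
  have hrpos : 0 < r := by
    rcases Nat.eq_zero_or_pos r with h0 | h; swap; · exact h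
    exfalso
    have : i0 ∈ Finset.univ.filter fun i => lam i ≠ 0 := by simp [hi0]
    have := Finset.card_pos.mpr ⟨i0, this⟩
    omega
  have hrR : (0:ℝ) < r := by exact_mod_cast hrpos
  set c : ℝ := 1 - (k:ℝ)/r with hc
  have hc0 : 0 ≤ c := by
    rw [hc]
    have : (k:ℝ)/r ≤ 1 := by
      rw [div_le_one hrR]; exact_mod_cast hkr
    linarith
  have hev : ∀ i, -c ≤ hH.eigenvalues i := fun i =>
    eigenvalue_ge d _ hH i c (fun x => quadform_ge d k r hk hkr lam hnonneg hsum hr x)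
  have hinf : -c ≤ ⨅ i, hH.eigenvalues i := le_ciInf hev
  constructor
  · apply max_le hc0
    linarith
  · intro hall
    -- eigenvector √λ with eigenvalue -c
    set u : Fin d → ℝ := fun j => Real.sqrt (lam j) with hu
    have hu0 : u ≠ 0 := by
      intro h
      have : u i0 = 0 := by rw [h]; rfl
      rw [hu] at this
      exact hi0 ((Real.sqrt_eq_zero (hnonneg i0)).mp this)
    have heig : OmegaMat d k lam *ᵥ u = (-c) • u := by
      funext i
      simp only [mulVec, dotProduct, OmegaMat, Pi.smul_apply, smul_eq_mul, hu]
      have expand : ∑ j, ((if i = j then (k:ℝ) * lam i else 0) - Real.sqrt (lam i * lam j)) * Real.sqrt (lam j)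
          = (∑ j, (if i = j then (k:ℝ) * lam i * Real.sqrt (lam j) else 0))
            - Real.sqrt (lam i) * ∑ j, lam j := by
        rw [Finset.mul_sum, ← Finset.sum_sub_distrib]
        refine Finset.sum_congr rfl fun j _ => ?_
        rw [Real.sqrt_mul (hnonneg i), sub_mul, mul_assoc, Real.mul_self_sqrt (hnonneg j)]
        split_ifs <;> ring
      rw [expand, Finset.sum_ite_eq Finset.univ i (fun j => (k:ℝ) * lam i * Real.sqrt (lam j)), hsum]
      simp only [Finset.mem_univ, if_true, mul_one]
      by_cases hzi : lam i = 0
      · simp [hzi]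
      · rw [hall i hzi, hc]
        have h1r : Real.sqrt (1/(r:ℝ)) = Real.sqrt (1/(r:ℝ)) := rfl
        ring
    obtain ⟨j0, hj0⟩ := eigenvalue_exists d _ hH u hu0 (-c) heig
    have hle : (⨅ i, hH.eigenvalues i) ≤ -c := by
      have hbdd : BddBelow (Set.range hH.eigenvalues) := (Set.finite_range _).bddBelow
      calc (⨅ i, hH.eigenvalues i) ≤ hH.eigenvalues j0 := ciInf_le hbdd j0
        _ = -c := hj0
    have heq : (⨅ i, hH.eigenvalues i) = -c := le_antisymm hle hinf
    rw [heq, neg_neg]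
    exact max_eq_right hc0
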